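/- For every N ≥ 2 and γ > 0 there exist maximally monotone operators A, B on ℝ² (namely normal cones of two lines through the origin) such that the Douglas–Rachford iteration with relaxation λ = 1 started from any unit vector w¹ satisfies ‖T(w^N) − w^N‖² = ((N−1)^{N−1}/N^N) · ‖w¹ − w⋆‖², where w⋆ = 0 is a fixed point of the DR operator T. In particular the sublinear rate ((N−1)^{N−1}/N^N)‖w¹−w⋆‖² for the DR residual is tight. -/

import Mathlib

lemma normsq2 (y : EuclideanSpace ℝ (Fin 2)) : ‖y‖ ^ 2 = y 0 ^ 2 + y 1 ^ 2 := by
  rw [EuclideanSpace.norm_sq_eq]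
  simp [Fin.sum_univ_two]

lemma proj_line (v : EuclideanSpace ℝ (Fin 2)) (hv : ‖v‖ = 1) (x : EuclideanSpace ℝ (Fin 2)) :
    ((Submodule.orthogonalProjectionOnto (ℝ ∙ v) x : EuclideanSpace ℝ (Fin 2)))
      = (v 0 * x 0 + v 1 * x 1) • v := by
  rw [← Submodule.starProjection_apply, Submodule.starProjection_unit_singleton ℝ hv x]
  congr 1
  simp [PiLp.inner_apply, Fin.sum_univ_two, RCLike.inner_apply]
  ring

theorem stmt3 (N : ℕ) (hN : 2 ≤ N) (γ : ℝ) (hγ : 0 < γ) :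
    ∃ P Q : Submodule ℝ (EuclideanSpace ℝ (Fin 2)),
      ∀ T : EuclideanSpace ℝ (Fin 2) → EuclideanSpace ℝ (Fin 2),
        (∀ x, T x = (1/2 : ℝ) • x + (1/2 : ℝ) •
            ((2 : ℝ) • (Submodule.orthogonalProjectionOnto Q
                ((2 : ℝ) • (Submodule.orthogonalProjectionOnto P x : EuclideanSpace ℝ (Fin 2)) - x) :
                  EuclideanSpace ℝ (Fin 2)) -
              ((2 : ℝ) • (Submodule.orthogonalProjectionOnto P x : EuclideanSpace ℝ (Fin 2)) - x))) →
        T 0 = 0 ∧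
        ∀ w1 : EuclideanSpace ℝ (Fin 2), ‖w1‖ = 1 →
          ∀ w : ℕ → EuclideanSpace ℝ (Fin 2), w 1 = w1 → (∀ k, w (k + 1) = T (w k)) →
            ‖T (w N) - w N‖ ^ 2 =
              (((N - 1 : ℕ) ^ (N - 1 : ℕ) : ℝ) / (N : ℝ) ^ N) * ‖w1 - 0‖ ^ 2 := by
  have hNpos : (0 : ℝ) < (N : ℝ) := by
    have : 0 < N := by omega
    exact_mod_cast this
  have hN1 : (1 : ℝ) ≤ (N : ℝ) := by
    have : 1 ≤ N := by omega
    exact_mod_cast this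
  set c : ℝ := Real.sqrt (((N : ℝ) - 1) / N) with hc_def
  set s : ℝ := Real.sqrt (1 / N) with hs_def
  have hc2 : c ^ 2 = ((N : ℝ) - 1) / N := by
    rw [hc_def, Real.sq_sqrt]
    have : (0:ℝ) ≤ (N : ℝ) - 1 := by linarith
    positivity
  have hs2 : s ^ 2 = 1 / (N : ℝ) := by
    rw [hs_def, Real.sq_sqrt]
    positivity
  have hcs : c ^ 2 + s ^ 2 = 1 := by
    rw [hc2, hs2]; field_simp; ring
  -- the two lines
  set e : EuclideanSpace ℝ (Fin 2) := !₂[1, 0] with he_def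
  set u : EuclideanSpace ℝ (Fin 2) := !₂[c, s] with hu_def
  have he0 : e 0 = 1 := rfl
  have he1 : e 1 = 0 := rfl
  have hu0 : u 0 = c := rfl
  have hu1 : u 1 = s := rfl
  have hene : ‖e‖ = 1 := by
    have h := normsq2 e
    rw [he0, he1] at h
    rw [← Real.sqrt_sq (norm_nonneg e), h]
    norm_num
  have hune : ‖u‖ = 1 := by
    have h := normsq2 u
    rw [hu0, hu1, hcs] at h
    rw [← Real.sqrt_sq (norm_nonneg u), h, Real.sqrt_one]
  refine ⟨ℝ ∙ e, ℝ ∙ u, ?_⟩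
  intro T hT
  -- component formulas for T
  have hT0 : ∀ x : EuclideanSpace ℝ (Fin 2), T x 0 = c ^ 2 * x 0 - c * s * x 1 := by
    intro x
    have h := hT x
    rw [proj_line e hene x] at h
    rw [proj_line u hune _] at h
    have h0 := congrFun (congrArg WithLp.ofLp h) 0
    simp only [PiLp.add_apply, PiLp.sub_apply, PiLp.smul_apply, smul_eq_mul,
      he0, he1, hu0, hu1] at h0
    rw [h0]; ring
  have hT1 : ∀ x : EuclideanSpace ℝ (Fin 2), T x 1 = c * s * x 0 + c ^ 2 * x 1 := by
    intro x
    have h := hT x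
    rw [proj_line e hene x] at h
    rw [proj_line u hune _] at h
    have h1 := congrFun (congrArg WithLp.ofLp h) 1
    simp only [PiLp.add_apply, PiLp.sub_apply, PiLp.smul_apply, smul_eq_mul,
      he0, he1, hu0, hu1] at h1
    rw [h1]
    linear_combination (-(x 1)) * hcs
  have hzero0 : T 0 0 = (0 : ℝ) := by
    rw [hT0]
    norm_num [show ((0 : EuclideanSpace ℝ (Fin 2)) 0) = 0 from rfl,
      show ((0 : EuclideanSpace ℝ (Fin 2)) 1) = 0 from rfl]
  have hzero1 : T 0 1 = (0 : ℝ) := by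
    rw [hT1]
    norm_num [show ((0 : EuclideanSpace ℝ (Fin 2)) 0) = 0 from rfl,
      show ((0 : EuclideanSpace ℝ (Fin 2)) 1) = 0 from rfl]
  constructor
  · ext i
    fin_cases i
    · exact hzero0
    · exact hzero1
  intro w1 hw1 w hw1' hrec
  -- contraction and residual identities
  have hres : ∀ x : EuclideanSpace ℝ (Fin 2), ‖T x - x‖ ^ 2 = s ^ 2 * ‖x‖ ^ 2 := by
    intro x
    rw [normsq2, normsq2]
    simp only [PiLp.sub_apply, hT0 x, hT1 x]
    linear_combination ((c ^ 2 - 1) * (x 0 ^ 2 + x 1 ^ 2)) * hcs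
  have hcon : ∀ x : EuclideanSpace ℝ (Fin 2), ‖T x‖ ^ 2 = c ^ 2 * ‖x‖ ^ 2 := by
    intro x
    rw [normsq2, normsq2, hT0 x, hT1 x]
    linear_combination (c ^ 2 * (x 0 ^ 2 + x 1 ^ 2)) * hcs
  have hiter : ∀ m : ℕ, ‖w (1 + m)‖ ^ 2 = (c ^ 2) ^ m := by
    intro m
    induction m with
    | zero => simp [hw1', hw1]
    | succ m ih =>
        have : w (1 + (m + 1)) = T (w (1 + m)) := by
          rw [show 1 + (m + 1) = (1 + m) + 1 by ring, hrec]
        rw [this, hcon, ih, pow_succ]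
        ring
  have hNsplit : N = 1 + (N - 1) := by omega
  have hwN : ‖w N‖ ^ 2 = (c ^ 2) ^ (N - 1) := by
    have h := hiter (N - 1)
    rw [← hNsplit] at h
    exact h
  rw [hres, hwN, hc2, hs2]
  have hcast : (((N - 1 : ℕ) : ℝ)) = (N : ℝ) - 1 := by
    have : 1 ≤ N := by omega
    push_cast [this]
    ring
  rw [sub_zero, hw1]
  have hpowN : (N : ℝ) ^ N = (N : ℝ) ^ (N - 1) * (N : ℝ) := by
    rw [← pow_succ]
    congr 1
    omega
  rw [hcast, div_pow, hpowN]
  rw [one_pow, mul_one, one_div, inv_mul_eq_div, div_div]
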